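/- Let J = (n_1,m_1,…,n_{d−1},m_{d−1},n_d,l) ∈ ℤ_{≥0}^{2d}. Then S(V_J) ⊆ V_{(n_1,m_1,…,n_{d−1},m_{d−1},n_d,l+1)}. -/

import Mathlib

open scoped Classical BigOperators

noncomputable section

namespace CycloMZV

/-- `mu n` is the set `μ_n` of `n`-th roots of unity in `ℂ`. -/
def mu (n : ℕ) : Set ℂ := {x : ℂ | x ^ n = 1}

variable (p M : ℕ) (ζ : ℂ)

/-- `ν_N = {ζ^m : m ≡ 1 (mod q)}` where `q = 6 - p`. -/
def nu : Set ℂ := {x : ℂ | ∃ m : ℕ, m % (6 - p) = 1 ∧ x = ζ ^ m}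

/-- `v x` is the `p`-adic valuation of (the least positive) `m` with `ζ ^ m = x`. -/
def vval (x : ℂ) : ℕ :=
  if h : ∃ m : ℕ, 0 < m ∧ ζ ^ m = x then padicValNat p (Nat.find h) else 0

/-- `Λ_c(x) = {ε ∈ ν_N : ε^(c·p^(v x)) = x}`. -/
def Lam (c : ℤ) (x : ℂ) : Set ℂ :=
  {ε : ℂ | ε ∈ nu p ζ ∧ ε ^ (c * (p : ℤ) ^ vval p ζ x) = x}

/-- Index `(ε, l)` of a basis vector `⟦ε;l⟧_p`. -/
abbrev Idx : Type := ℂ × ℕ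

/-- The ambient free `𝔽_p`-module with basis `⟦ε;l⟧_p`, `(ε, l) : ℂ × ℕ`;
the space `𝒲` is its submodule spanned by the `⟦ε;l⟧_p` with `ε ∈ ν_N`. -/
abbrev Wb (p : ℕ) := Idx →₀ ZMod p

/-- `θ(x)`. -/
def theta (x : ℂ) : Wb p :=
  if x = 1 then 0
  else ∑ᶠ c ∈ ({1, -1} : Set ℤ), ∑ᶠ ε ∈ Lam p ζ c x,
    Finsupp.single ((ε, 0) : Idx) (1 : ZMod p)

/-- `θ̃(x)`. -/
def thetaT (x : ℂ) : Wb p :=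
  if x = 1 then -∑ᶠ y ∈ mu (p ^ M), theta p ζ y else theta p ζ x

/-- The ambient free module with basis indexed by `d`-tuples; `𝒲^{⊗d}` is its
submodule spanned by the basis tensors with all `ε`'s in `ν_N`. -/
abbrev Wt (p d : ℕ) := (Fin d → Idx) →₀ ZMod p

/-- The weight-`k` part `(𝒲^{⊗d})_k`. -/
def WtPart (d k : ℕ) : Submodule (ZMod p) (Wt p d) :=
  Submodule.span (ZMod p)
    {w : Wt p d | ∃ a : Fin d → Idx, (∀ i, (a i).1 ∈ nu p ζ) ∧
      d + ∑ i, (a i).2 = k ∧ w = Finsupp.single a 1}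

/-- `𝒲_1^{⊗d}`: the span of the basis tensors `⟦ε_1,…,ε_d;0,…,0⟧_p` with `ε_i ∈ ν_N`. -/
def W1Part (d : ℕ) : Submodule (ZMod p) (Wt p d) :=
  Submodule.span (ZMod p)
    {w : Wt p d | ∃ a : Fin d → Idx, (∀ i, (a i).1 ∈ nu p ζ ∧ (a i).2 = 0) ∧
      w = Finsupp.single a 1}

/-- Delete the `i`-th entry (0-based) and append `b` at the end. -/
def moveL {d : ℕ} (i : ℕ) (a : Fin d → Idx) (b : Idx) : Fin d → Idx :=
  fun j =>
    if h2 : (j : ℕ) + 1 < d then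
      (if (j : ℕ) < i then a j else a ⟨(j : ℕ) + 1, h2⟩)
    else b

/-- Delete `ε_{i+1}` and `l_i` (0-based `i`) and append `b` at the end. -/
def moveR {d : ℕ} (i : ℕ) (a : Fin d → Idx) (b : Idx) : Fin d → Idx :=
  fun j =>
    if h2 : (j : ℕ) + 1 < d then
      (if (j : ℕ) < i then a j
       else if (j : ℕ) = i then ((a j).1, (a ⟨(j : ℕ) + 1, h2⟩).2)
       else a ⟨(j : ℕ) + 1, h2⟩)
    else b

/-- The second-to-last `l`-entry `l_{d-1}` (and `0` if `d ≤ 1`). -/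
def lprev {d : ℕ} (a : Fin d → Idx) : ℕ :=
  if h : 2 ≤ d then (a ⟨d - 2, by omega⟩).2 else 0

/-- The last `l`-entry `l_d` (and `0` if `d = 0`). -/
def llast {d : ℕ} (a : Fin d → Idx) : ℕ :=
  if h : 1 ≤ d then (a ⟨d - 1, by omega⟩).2 else 0

/-- Replace the last two `l`-entries by `s` and `r`. -/
def updEnd {d : ℕ} (a : Fin d → Idx) (s r : ℕ) : Fin d → Idx :=
  fun j =>
    if (j : ℕ) + 1 = d then ((a j).1, r)
    else if (j : ℕ) + 2 = d then ((a j).1, s)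
    else a j

/-- value of `𝓔_d` on the basis tensor indexed by `a`. -/
def Ebase (d : ℕ) (a : Fin d → Idx) : Wt p d :=
  (∑ i : Fin d,
    if h : (i : ℕ) + 1 < d then
      (if (a i).2 = 0 then
        Finsupp.mapDomain (moveL (i : ℕ) a)
          (theta p ζ ((a i).1 / (a ⟨(i : ℕ) + 1, h⟩).1))
        - Finsupp.mapDomain (moveR (i : ℕ) a)
          (theta p ζ ((a ⟨(i : ℕ) + 1, h⟩).1 / (a i).1))
      else 0)
    else 0)
  + ∑ r ∈ Finset.Icc (llast a) (lprev a + llast a),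
      ((-1 : ZMod p) ^ (r - llast a) * (r.choose (llast a) : ZMod p)) •
        Finsupp.single (updEnd a (lprev a + llast a - r) r) (1 : ZMod p)

/-- The map `𝓔_d`. -/
def Ecal (d : ℕ) : Module.End (ZMod p) (Wt p d) :=
  Finsupp.linearCombination (ZMod p) (Ebase p ζ d)

/-- value of `L̃_i` (0-based `i`) on the basis tensor indexed by `a`. -/
def LtilBase (d i : ℕ) (a : Fin d → Idx) : Wt p d :=
  if h : i + 1 < d then
    (if (a ⟨i, by omega⟩).2 = 0 then
      Finsupp.mapDomain (moveL i a)
        (thetaT p M ζ ((a ⟨i, by omega⟩).1 / (a ⟨i + 1, h⟩).1))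
    else 0)
  else 0

/-- `L̃_i` (with 0-based `i`, so the paper's `L̃_i` is `Ltil p M ζ d (i-1)`). -/
def Ltil (d i : ℕ) : Module.End (ZMod p) (Wt p d) :=
  Finsupp.linearCombination (ZMod p) (LtilBase p M ζ d i)

/-- value of `R̃_i` (0-based `i`) on the basis tensor indexed by `a`. -/
def RtilBase (d i : ℕ) (a : Fin d → Idx) : Wt p d :=
  if h : i + 1 < d then
    (if (a ⟨i, by omega⟩).2 = 0 then
      Finsupp.mapDomain (moveR i a)
        (thetaT p M ζ ((a ⟨i + 1, h⟩).1 / (a ⟨i, by omega⟩).1))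
    else 0)
  else 0

/-- `R̃_i` (with 0-based `i`, so the paper's `R̃_i` is `Rtil p M ζ d (i-1)`). -/
def Rtil (d i : ℕ) : Module.End (ZMod p) (Wt p d) :=
  Finsupp.linearCombination (ZMod p) (RtilBase p M ζ d i)

/-- value of `S` on the basis tensor indexed by `a`. -/
def Sbase (d : ℕ) (a : Fin d → Idx) : Wt p d :=
  ∑ r ∈ Finset.Icc (llast a + 1) (lprev a + llast a),
    ((-1 : ZMod p) ^ (r - llast a) * (r.choose (llast a) : ZMod p)) •
      Finsupp.single (updEnd a (lprev a + llast a - r) r) (1 : ZMod p)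

/-- The map `S`. -/
def Sop (d : ℕ) : Module.End (ZMod p) (Wt p d) :=
  Finsupp.linearCombination (ZMod p) (Sbase p d)

end CycloMZV
namespace CycloMZV

variable (p M : ℕ) (ζ : ℂ)

/-- `G = Gal(ℚ(ζ_N)/ℚ(ζ_q))`, identified with `{a ∈ (ℤ/Nℤ)ˣ : a ≡ 1 (mod q)}`. -/
def Gal : Subgroup (ZMod ((6 - p) * p ^ M))ˣ :=
  (Units.map (ZMod.castHom (show (6 - p) ∣ (6 - p) * p ^ M from ⟨p ^ M, rfl⟩)
    (ZMod (6 - p))).toMonoidHom).ker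

/-- The Galois action of `a ∈ (ℤ/Nℤ)ˣ` on roots of unity: `x ↦ x^a`. -/
def gact (σ : (ZMod ((6 - p) * p ^ M))ˣ) (x : ℂ) : ℂ :=
  x ^ ((σ : ZMod ((6 - p) * p ^ M)).val)

/-- Diagonal Galois action on index tuples. -/
def actTup {d : ℕ} (σ : (ZMod ((6 - p) * p ^ M))ˣ) (a : Fin d → Idx) : Fin d → Idx :=
  fun j => (gact p M σ ((a j).1), (a j).2)

/-- Diagonal Galois action of `σ ∈ G` on `𝒲^{⊗d}`. -/
def actW (d : ℕ) (σ : Gal p M) : Module.End (ZMod p) (Wt p d) :=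
  Finsupp.lmapDomain (ZMod p) (ZMod p) (actTup p M (σ : (ZMod ((6 - p) * p ^ M))ˣ))

/-- The group algebra `𝔽_p[G]`. -/
abbrev GA (p M : ℕ) := MonoidAlgebra (ZMod p) (Gal p M)

/-- Action of a group-algebra element `g ∈ 𝔽_p[G]` on `𝒲^{⊗d}`. -/
def actA (d : ℕ) (g : GA p M) : Module.End (ZMod p) (Wt p d) :=
  Finsupp.sum g.coeff (fun σ c => c • actW p M d σ)

/-- The augmentation ideal `I_G ⊆ 𝔽_p[G]`. -/
def IG : Ideal (GA p M) :=
  RingHom.ker (MonoidAlgebra.lift (ZMod p) (ZMod p) (Gal p M) 1).toRingHom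

end CycloMZV
namespace CycloMZV

variable (p M : ℕ) (ζ : ℂ)

/-- `n_{i+1}` (0-based `i`): the entry of `J` at position `2i`. -/
def Jn (d : ℕ) (J : Fin (2 * d) → ℕ) (i : ℕ) : ℕ :=
  if h : 2 * i < 2 * d then J ⟨2 * i, h⟩ else 0

/-- `m_{i+1}` (0-based `i`): the entry of `J` at position `2i+1`. -/
def Jm (d : ℕ) (J : Fin (2 * d) → ℕ) (i : ℕ) : ℕ :=
  if h : 2 * i + 1 < 2 * d then J ⟨2 * i + 1, h⟩ else 0

/-- `l`: the last entry of `J`. -/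
def Jl (d : ℕ) (J : Fin (2 * d) → ℕ) : ℕ :=
  if h : 2 * d - 1 < 2 * d then J ⟨2 * d - 1, h⟩ else 0

/-- the product `σ_1 ⋯ σ_{min(j+1,d-1)}` (0-based slot `j`). -/
def prodUpTo (d : ℕ) (σ : Fin (d - 1) → Gal p M) (j : ℕ) : Gal p M :=
  ∏ i ∈ Finset.range (min (j + 1) (d - 1)),
    (if h : i < d - 1 then σ ⟨i, h⟩ else 1)

/-- `Φ_{σ_1,…,σ_{d-1}}` on index tuples. -/
def PhiTup (d : ℕ) (σ : Fin (d - 1) → Gal p M) (a : Fin d → Idx) : Fin d → Idx :=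
  fun j => (gact p M ((prodUpTo p M d σ (j : ℕ) : (ZMod ((6 - p) * p ^ M))ˣ)) ((a j).1), (a j).2)

/-- The automorphism `Φ_{σ_1,…,σ_{d-1}}` of `𝒲^{⊗d}`. -/
def PhiS (d : ℕ) (σ : Fin (d - 1) → Gal p M) : Module.End (ZMod p) (Wt p d) :=
  Finsupp.lmapDomain (ZMod p) (ZMod p) (PhiTup p M d σ)

/-- The multilinear extension `Φ_{g_1,…,g_{d-1}}` for `g_1,…,g_{d-1} ∈ 𝔽_p[G]`. -/
def Phi (d : ℕ) (g : Fin (d - 1) → GA p M) : Module.End (ZMod p) (Wt p d) :=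
  ∑ᶠ σ : Fin (d - 1) → Gal p M,
    (∏ i, ((g i).coeff : Gal p M →₀ ZMod p) (σ i)) • PhiS p M d σ

/-- The subspace `V_J ⊆ 𝒲^{⊗d}` for `J = (n_1,m_1,…,n_{d-1},m_{d-1},n_d,l)`. -/
def VJ (d : ℕ) (J : Fin (2 * d) → ℕ) : Submodule (ZMod p) (Wt p d) :=
  if ∀ i : ℕ, i < d → Jn d J i ≤ M then
    Submodule.span (ZMod p)
      {w : Wt p d | ∃ g : Fin (d - 1) → GA p M,
        (∀ i : Fin (d - 1), g i ∈ IG p M ^ Jm d J (i : ℕ)) ∧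
        ∃ ε : Fin d → ℂ, (∀ i, ε i ∈ nu p ζ) ∧
        ∃ lv : Fin d → ℕ, (∀ h : 0 < d, Jl d J ≤ lv ⟨d - 1, by omega⟩) ∧
          w = Phi p M d g
            (∑ᶠ η ∈ {η : Fin d → ℂ | ∀ i : Fin d, η i ∈ mu (p ^ Jn d J (i : ℕ))},
              Finsupp.single (fun i => ((η i * ε i, lv i) : Idx)) (1 : ZMod p))}
  else ⊥

/-- lexicographic (strict) order on tuples. -/
def lexLt {n : ℕ} (J J' : Fin n → ℕ) : Prop :=
  ∃ j : Fin n, (∀ i : Fin n, (i : ℕ) < (j : ℕ) → J i = J' i) ∧ J j < J' j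

/-- The set `𝒥`: `n_i ≤ n_{i+1}`, and `n_i = n_{i+1} → m_i = 0`, for `1 ≤ i ≤ d-1`. -/
def goodJ (d : ℕ) (J : Fin (2 * d) → ℕ) : Prop :=
  (∀ i : ℕ, i + 1 < d → Jn d J i ≤ Jn d J (i + 1)) ∧
  (∀ i : ℕ, i + 1 < d → Jn d J i = Jn d J (i + 1) → Jm d J i = 0)

end CycloMZV
namespace CycloMZV


section SAux

variable (p M : ℕ)

lemma llast_PhiTup {d : ℕ} (σ : Fin (d - 1) → Gal p M) (a : Fin d → Idx) :
    llast (PhiTup p M d σ a) = llast a := by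
  unfold llast PhiTup
  split <;> rfl

lemma lprev_PhiTup {d : ℕ} (σ : Fin (d - 1) → Gal p M) (a : Fin d → Idx) :
    lprev (PhiTup p M d σ a) = lprev a := by
  unfold lprev PhiTup
  split <;> rfl

lemma PhiTup_updEnd {d : ℕ} (σ : Fin (d - 1) → Gal p M) (a : Fin d → Idx) (s r : ℕ) :
    PhiTup p M d σ (updEnd a s r) = updEnd (PhiTup p M d σ a) s r := by
  funext j
  simp only [PhiTup, updEnd]
  split_ifs <;> rfl

lemma PhiS_Sbase {d : ℕ} (σ : Fin (d - 1) → Gal p M) (a : Fin d → Idx) :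
    PhiS p M d σ (Sbase p d a) = Sbase p d (PhiTup p M d σ a) := by
  unfold Sbase
  rw [map_sum]
  simp only [map_smul, llast_PhiTup, lprev_PhiTup]
  refine Finset.sum_congr rfl fun r _ => ?_
  congr 1
  rw [PhiS, Finsupp.lmapDomain_apply, Finsupp.mapDomain_single, PhiTup_updEnd]

lemma Sop_PhiS_comm {d : ℕ} (σ : Fin (d - 1) → Gal p M) (x : Wt p d) :
    Sop p d (PhiS p M d σ x) = PhiS p M d σ (Sop p d x) := by
  induction x using Finsupp.induction_linear with
  | zero => simp
  | add a b ha hb => simp only [map_add, ha, hb]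
  | single a c =>
    have h1 : PhiS p M d σ (Finsupp.single a c) = Finsupp.single (PhiTup p M d σ a) c := by
      rw [PhiS, Finsupp.lmapDomain_apply, Finsupp.mapDomain_single]
    rw [h1, Sop, Finsupp.linearCombination_single, Finsupp.linearCombination_single,
      map_smul, PhiS_Sbase]

lemma Sop_Phi_comm {d : ℕ} (g : Fin (d - 1) → GA p M) (x : Wt p d) :
    Sop p d (Phi p M d g x) = Phi p M d g (Sop p d x) := by
  have hPhi : Phi p M d g = ∑ σ ∈ Fintype.piFinset (fun i => (g i).coeff.support),
      (∏ i, ((g i).coeff : Gal p M →₀ ZMod p) (σ i)) • PhiS p M d σ := by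
    rw [Phi]
    apply finsum_eq_finset_sum_of_support_subset
    intro σ hσ
    simp only [Function.mem_support] at hσ
    simp only [Finset.coe_sort_coe, Fintype.mem_piFinset, Finset.mem_coe]
    intro i
    by_contra h
    have h0 : ((g i).coeff : Gal p M →₀ ZMod p) (σ i) = 0 := Finsupp.notMem_support_iff.mp h
    refine hσ ?_
    have hz : (∏ j : Fin (d - 1), ((g j).coeff : Gal p M →₀ ZMod p) (σ j)) = 0 :=
      Finset.prod_eq_zero (Finset.mem_univ i) h0
    rw [hz, zero_smul]
  rw [hPhi]
  simp only [LinearMap.sum_apply, LinearMap.smul_apply, map_sum, map_smul, Sop_PhiS_comm]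

lemma mu_finite (n : ℕ) (hn : n ≠ 0) : (mu n).Finite := by
  have hsub : mu n ⊆ {x : ℂ | (Polynomial.X ^ n - Polynomial.C 1 : Polynomial ℂ).IsRoot x} := by
    intro x hx
    simp only [mu, Set.mem_setOf_eq] at hx
    simp only [Set.mem_setOf_eq, Polynomial.IsRoot.def, Polynomial.eval_sub,
      Polynomial.eval_pow, Polynomial.eval_X, Polynomial.eval_C, hx, sub_self]
  exact (Polynomial.finite_setOf_isRoot
    (Polynomial.X_pow_sub_C_ne_zero (Nat.pos_of_ne_zero hn) 1)).subset hsub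

end SAux

/-- Let `J = (n_1,m_1,…,n_{d−1},m_{d−1},n_d,l)`. Then
`S(V_J) ⊆ V_{(n_1,m_1,…,n_{d−1},m_{d−1},n_d,l+1)}`. -/
theorem Sop_VJ_subset (p M : ℕ) (hp : p = 2 ∨ p = 3) (ζ : ℂ)
    (hζ : IsPrimitiveRoot ζ ((6 - p) * p ^ M)) (d : ℕ) (hd : 2 ≤ d)
    (J : Fin (2 * d) → ℕ) :
    ∀ u ∈ VJ p M ζ d J,
      Sop p d u ∈ VJ p M ζ d (fun k => if (k : ℕ) = 2 * d - 1 then J k + 1 else J k) := by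
  intro u hu
  set J' : Fin (2 * d) → ℕ := fun k => if (k : ℕ) = 2 * d - 1 then J k + 1 else J k
    with hJ'def
  have hJn : ∀ i : ℕ, Jn d J' i = Jn d J i := by
    intro i
    unfold Jn
    split
    · next h =>
      simp only [hJ'def]
      rw [if_neg (by omega)]
    · rfl
  have hJm : ∀ i : Fin (d - 1), Jm d J' (i : ℕ) = Jm d J (i : ℕ) := by
    intro i
    have hi := i.2
    unfold Jm
    split
    · next h =>
      simp only [hJ'def]
      rw [if_neg (by omega)]
    · rfl
  have hJl : Jl d J' = Jl d J + 1 := by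
    have h2d : 2 * d - 1 < 2 * d := by omega
    unfold Jl
    rw [dif_pos h2d, dif_pos h2d]
    simp only [hJ'def]
    simp
  by_cases hcond : ∀ i : ℕ, i < d → Jn d J i ≤ M
  · have hcond' : ∀ i : ℕ, i < d → Jn d J' i ≤ M := fun i hi => (hJn i) ▸ hcond i hi
    simp only [VJ, if_pos hcond] at hu
    simp only [VJ, if_pos hcond']
    refine Submodule.span_induction (fun w hw => ?_)
      (by rw [map_zero]; exact Submodule.zero_mem _)
      (fun x y _ _ hx hy => by rw [map_add]; exact Submodule.add_mem _ hx hy)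
      (fun c x _ hx => by rw [map_smul]; exact Submodule.smul_mem _ c hx) hu
    obtain ⟨g, hg, ε, hε, lv, hlv, rfl⟩ := hw
    -- finiteness of the set of roots-of-unity tuples
    have hE : ({η : Fin d → ℂ | ∀ i : Fin d, η i ∈ mu (p ^ Jn d J (i : ℕ))}).Finite := by
      have hEq : {η : Fin d → ℂ | ∀ i : Fin d, η i ∈ mu (p ^ Jn d J (i : ℕ))}
          = Set.pi Set.univ (fun i : Fin d => mu (p ^ Jn d J (i : ℕ))) := by
        ext η; simp [Set.mem_pi]
      rw [hEq]
      exact Set.Finite.pi fun i => mu_finite _ (pow_ne_zero _ (by omega))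
    set lB := lv ⟨d - 1, by omega⟩ with hlB
    set lA := lv ⟨d - 2, by omega⟩ with hlA
    -- the new l-tuples
    set lvnew : ℕ → Fin d → ℕ := fun r j =>
      if (j : ℕ) + 1 = d then r else if (j : ℕ) + 2 = d then lA + lB - r else lv j
      with hlvnew
    have h_llast : ∀ η : Fin d → ℂ,
        llast (fun i => ((η i * ε i, lv i) : Idx)) = lB := by
      intro η
      unfold llast
      rw [dif_pos (by omega : 1 ≤ d)]
    have h_lprev : ∀ η : Fin d → ℂ,
        lprev (fun i => ((η i * ε i, lv i) : Idx)) = lA := by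
      intro η
      unfold lprev
      rw [dif_pos (by omega : 2 ≤ d)]
    have h_upd : ∀ (η : Fin d → ℂ) (r : ℕ),
        updEnd (fun i => ((η i * ε i, lv i) : Idx)) (lA + lB - r) r
          = fun i => ((η i * ε i, lvnew r i) : Idx) := by
      intro η r
      funext j
      simp only [updEnd, hlvnew]
      split_ifs <;> rfl
    have key : Sop p d
        (∑ᶠ η ∈ {η : Fin d → ℂ | ∀ i : Fin d, η i ∈ mu (p ^ Jn d J (i : ℕ))},
          Finsupp.single (fun i => ((η i * ε i, lv i) : Idx)) (1 : ZMod p))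
        = ∑ r ∈ Finset.Icc (lB + 1) (lA + lB),
            ((-1 : ZMod p) ^ (r - lB) * (r.choose lB : ZMod p)) •
            (∑ᶠ η ∈ {η : Fin d → ℂ | ∀ i : Fin d, η i ∈ mu (p ^ Jn d J (i : ℕ))},
              Finsupp.single (fun i => ((η i * ε i, lvnew r i) : Idx)) (1 : ZMod p)) := by
      simp only [finsum_mem_eq_finite_toFinset_sum _ hE]
      rw [map_sum]
      have hterm : ∀ η ∈ hE.toFinset,
          Sop p d (Finsupp.single (fun i => ((η i * ε i, lv i) : Idx)) (1 : ZMod p))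
          = ∑ r ∈ Finset.Icc (lB + 1) (lA + lB),
              ((-1 : ZMod p) ^ (r - lB) * (r.choose lB : ZMod p)) •
              Finsupp.single (fun i => ((η i * ε i, lvnew r i) : Idx)) (1 : ZMod p) := by
        intro η _
        rw [Sop, Finsupp.linearCombination_single, one_smul, Sbase,
          h_llast η, h_lprev η]
        refine Finset.sum_congr rfl fun r _ => ?_
        rw [h_upd η r]
      rw [Finset.sum_congr rfl hterm, Finset.sum_comm]
      refine Finset.sum_congr rfl fun r _ => ?_
      rw [Finset.smul_sum]
    rw [Sop_Phi_comm, key, map_sum]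
    refine Submodule.sum_mem _ fun r hr => ?_
    rw [map_smul]
    refine Submodule.smul_mem _ _ (Submodule.subset_span ?_)
    refine ⟨g, fun i => (hJm i) ▸ hg i, ε, hε, lvnew r, ?_, ?_⟩
    · intro h
      have hbeta : lvnew r ⟨d - 1, by omega⟩ = r := by
        simp only [hlvnew]
        rw [if_pos (by omega : (d - 1) + 1 = d)]
      rw [hbeta, hJl]
      have h1 := (Finset.mem_Icc.mp hr).1
      have h2 := hlv (by omega)
      omega
    · simp only [hJn]
  · have hcond' : ¬ ∀ i : ℕ, i < d → Jn d J' i ≤ M := by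
      intro h
      exact hcond fun i hi => (hJn i) ▸ h i hi
    simp only [VJ, if_neg hcond'] at *
    simp only [VJ, if_neg hcond, Submodule.mem_bot] at hu
    rw [hu, map_zero]
    exact Submodule.zero_mem _

end CycloMZV
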